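/- Let X be a nonnegative random variable whose CDF satisfies F_X(x) = (α/(β+1)) x^{β+1} + o(x^{β+1}) as x → 0⁺ for constants α > 0, β ≥ 0, plus the exact dominance condition F_X(x) ≤ C x^{β+1} for all x. Let ξ be inverse gamma with shape m > 1 and mean 1, independent of X, and W = ξX. Then as u → 0⁺, the CDF of W satisfies F_W(u) ~ Γ(β+m+1)/(Γ(m)(m−1)^{β+1}) · (α/(β+1)) u^{β+1}. -/

import Mathlib

open MeasureTheory Set Filter Topology

/-- Asymptotic CDF (outage probability) of an inverse-gamma composite model: if the
baseline fading CDF behaves as (α/(β+1)) x^{β+1} near 0 and is dominated by C x^{β+1},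
then F_W(u) ~ Γ(β+m+1)/(Γ(m)(m−1)^{β+1}) · (α/(β+1)) u^{β+1} as u → 0⁺. -/
theorem composite_cdf_asymptotic (m α β C : ℝ) (hm : 1 < m) (hα : 0 < α) (hβ : 0 ≤ β)
    (FX : ℝ → ℝ) (hmeas : Measurable FX) (hmono : Monotone FX) (h0 : ∀ x, 0 ≤ FX x)
    (hlim : Tendsto (fun x => FX x / x ^ (β + 1)) (𝓝[>] 0) (𝓝 (α / (β + 1))))
    (hdom : ∀ x, 0 ≤ x → FX x ≤ C * x ^ (β + 1)) :
    Tendsto (fun u => (∫ t in Ioi (0:ℝ), FX (u * t) *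
          ((m - 1) ^ m / Real.Gamma m * t ^ (m - 1) * Real.exp (-(m - 1) * t))) /
        (Real.Gamma (β + m + 1) / (Real.Gamma m * (m - 1) ^ (β + 1)) * (α / (β + 1)) * u ^ (β + 1)))
      (𝓝[>] 0) (𝓝 1) := by
  have hm1 : (0:ℝ) < m - 1 := by linarith
  have hβ1 : (0:ℝ) < β + 1 := by linarith
  have hΓm : 0 < Real.Gamma m := Real.Gamma_pos_of_pos (by linarith)
  have hΓβ : 0 < Real.Gamma (β + m + 1) := Real.Gamma_pos_of_pos (by linarith)
  have hC : 0 ≤ C := by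
    have h := hdom 1 zero_le_one
    have := h0 1
    simp only [Real.one_rpow, mul_one] at h
    linarith
  set f : ℝ → ℝ := fun t => (m - 1) ^ m / Real.Gamma m * t ^ (m - 1) * Real.exp (-(m - 1) * t)
    with hf
  have hfmeas : Measurable f := by fun_prop
  have hfnn : ∀ t : ℝ, 0 ≤ t → 0 ≤ f t := fun t ht => by
    refine mul_nonneg (mul_nonneg (div_nonneg ?_ hΓm.le) (Real.rpow_nonneg ht _))
      (Real.exp_pos _).le
    exact Real.rpow_nonneg hm1.le _
  set K : ℝ := Real.Gamma (β + m + 1) / (Real.Gamma m * (m - 1) ^ (β + 1)) with hKdef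
  have hA : (0:ℝ) < (m - 1) ^ (β + 1) := Real.rpow_pos_of_pos hm1 _
  have hK : 0 < K := by positivity
  have hfgeq : EqOn (fun t : ℝ => t ^ (β + 1) * f t)
      (fun t => (m - 1) ^ m / Real.Gamma m *
        (t ^ ((β + m + 1) - 1) * Real.exp (-((m - 1) * t)))) (Ioi 0) := by
    intro t ht
    have ht' : (0:ℝ) < t := ht
    have h2 : t ^ (β + 1) * t ^ (m - 1) = t ^ ((β + m + 1) - 1) := by
      rw [← Real.rpow_add ht']; ring_nf
    simp only [hf, neg_mul]
    calc t ^ (β + 1) * ((m - 1) ^ m / Real.Gamma m * t ^ (m - 1) * Real.exp (-((m - 1) * t)))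
        = (m - 1) ^ m / Real.Gamma m *
          ((t ^ (β + 1) * t ^ (m - 1)) * Real.exp (-((m - 1) * t))) := by ring
      _ = _ := by rw [h2]
  have hJ : ∫ t in Ioi (0:ℝ), t ^ (β + 1) * f t = K := by
    rw [setIntegral_congr_fun measurableSet_Ioi hfgeq, integral_const_mul,
      Real.integral_rpow_mul_exp_neg_mul_Ioi (by linarith) hm1, one_div,
      ← Real.rpow_neg_one (m - 1), ← Real.rpow_mul hm1.le]
    have h2 : (m - 1) ^ m * (m - 1) ^ ((-1) * (β + m + 1)) = (m - 1) ^ (-(β + 1)) := by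
      rw [← Real.rpow_add hm1]; ring_nf
    have h3 : (m - 1) ^ (-(β + 1)) = ((m - 1) ^ (β + 1))⁻¹ := Real.rpow_neg hm1.le _
    calc (m - 1) ^ m / Real.Gamma m *
          ((m - 1) ^ ((-1) * (β + m + 1)) * Real.Gamma (β + m + 1))
        = ((m - 1) ^ m * (m - 1) ^ ((-1) * (β + m + 1))) * Real.Gamma (β + m + 1)
            / Real.Gamma m := by ring
      _ = ((m - 1) ^ (β + 1))⁻¹ * Real.Gamma (β + m + 1) / Real.Gamma m := by rw [h2, h3]
      _ = K := by rw [hKdef, inv_mul_eq_div, div_div, mul_comm ((m - 1) ^ (β + 1))]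
  -- integrability of the bound
  have hIntJ : IntegrableOn (fun t : ℝ => t ^ (β + 1) * f t) (Ioi 0) := by
    have h1 : IntegrableOn (fun t : ℝ => t ^ (β + m) * Real.exp (-(m - 1) * t)) (Ioi 0) := by
      have := integrableOn_rpow_mul_exp_neg_mul_rpow (p := 1) (s := β + m) (b := m - 1)
        (by linarith) one_pos hm1
      exact this.congr_fun (fun t _ => by simp only [Real.rpow_one]) measurableSet_Ioi
    have h2 : IntegrableOn (fun t : ℝ => (m - 1) ^ m / Real.Gamma m *
        (t ^ (β + m) * Real.exp (-(m - 1) * t))) (Ioi 0) := h1.const_mul _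
    refine h2.congr_fun (fun t ht => ?_) measurableSet_Ioi
    have ht' : (0:ℝ) < t := ht
    have h3 : t ^ (β + m) = t ^ (β + 1) * t ^ (m - 1) := by
      rw [← Real.rpow_add ht']; ring_nf
    simp only [hf]
    rw [h3]; ring
  have hbound_int : Integrable (fun t : ℝ => C * (t ^ (β + 1) * f t))
      (volume.restrict (Ioi 0)) := hIntJ.const_mul C
  -- dominated convergence
  have hDCT : Tendsto (fun u : ℝ => ∫ t in Ioi (0:ℝ), FX (u * t) / u ^ (β + 1) * f t)
      (𝓝[>] 0) (𝓝 (∫ t in Ioi (0:ℝ), α / (β + 1) * (t ^ (β + 1) * f t))) := by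
    refine tendsto_integral_filter_of_dominated_convergence
      (fun t => C * (t ^ (β + 1) * f t)) ?_ ?_ hbound_int ?_
    · filter_upwards with u
      exact (((hmeas.comp (measurable_const.mul measurable_id)).div_const _).mul
        hfmeas).aestronglyMeasurable
    · filter_upwards [self_mem_nhdsWithin] with u (hu : (0:ℝ) < u)
      rw [ae_restrict_iff' measurableSet_Ioi]
      filter_upwards with t ht
      have ht' : (0:ℝ) < t := ht
      have hup : (0:ℝ) < u ^ (β + 1) := Real.rpow_pos_of_pos hu _
      have hd : FX (u * t) ≤ C * (u ^ (β + 1) * t ^ (β + 1)) := by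
        have := hdom (u * t) (by positivity)
        rwa [Real.mul_rpow hu.le ht'.le] at this
      have hnn : 0 ≤ FX (u * t) / u ^ (β + 1) * f t :=
        mul_nonneg (div_nonneg (h0 _) hup.le) (hfnn t ht'.le)
      rw [Real.norm_eq_abs, abs_of_nonneg hnn]
      have h4 : FX (u * t) / u ^ (β + 1) ≤ C * t ^ (β + 1) := by
        rw [div_le_iff₀ hup]
        calc FX (u * t) ≤ C * (u ^ (β + 1) * t ^ (β + 1)) := hd
          _ = C * t ^ (β + 1) * u ^ (β + 1) := by ring
      calc FX (u * t) / u ^ (β + 1) * f t ≤ C * t ^ (β + 1) * f t :=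
            mul_le_mul_of_nonneg_right h4 (hfnn t ht'.le)
        _ = C * (t ^ (β + 1) * f t) := by ring
    · rw [ae_restrict_iff' measurableSet_Ioi]
      filter_upwards with t ht
      have htpos : (0:ℝ) < t := ht
      have h1 : Tendsto (fun u : ℝ => u * t) (𝓝[>] 0) (𝓝[>] 0) := by
        rw [tendsto_nhdsWithin_iff]
        constructor
        · have hc : Tendsto (fun u : ℝ => u * t) (𝓝 0) (𝓝 (0 * t)) :=
            (continuous_id.mul (continuous_const (y := t))).tendsto 0
          rw [zero_mul] at hc
          exact hc.mono_left nhdsWithin_le_nhds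
        · filter_upwards [self_mem_nhdsWithin] with u (hu : (0:ℝ) < u)
          exact mul_pos hu htpos
      have h2 := (hlim.comp h1).mul_const (t ^ (β + 1) * f t)
      refine Tendsto.congr' ?_ h2
      filter_upwards [self_mem_nhdsWithin] with u (hu : (0:ℝ) < u)
      have hup : u ^ (β + 1) ≠ 0 := (Real.rpow_pos_of_pos hu _).ne'
      have htp : t ^ (β + 1) ≠ 0 := (Real.rpow_pos_of_pos htpos _).ne'
      simp only [Function.comp]
      rw [Real.mul_rpow hu.le htpos.le]
      field_simp
  -- assemble
  have hL : Tendsto (fun u : ℝ => (∫ t in Ioi (0:ℝ), FX (u * t) * f t) / u ^ (β + 1))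
      (𝓝[>] 0) (𝓝 (α / (β + 1) * K)) := by
    have heq : (fun u : ℝ => (∫ t in Ioi (0:ℝ), FX (u * t) * f t) / u ^ (β + 1)) =
        fun u : ℝ => ∫ t in Ioi (0:ℝ), FX (u * t) / u ^ (β + 1) * f t := by
      funext u
      rw [← integral_div]
      congr 1; funext t; ring
    rw [heq]
    have : (∫ t in Ioi (0:ℝ), α / (β + 1) * (t ^ (β + 1) * f t)) = α / (β + 1) * K := by
      rw [integral_const_mul, hJ]
    rw [← this]
    exact hDCT
  have hfinal := hL.div_const (K * (α / (β + 1)))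
  have hlimval : α / (β + 1) * K / (K * (α / (β + 1))) = 1 := by
    rw [mul_comm K]
    exact div_self (by positivity)
  rw [hlimval] at hfinal
  refine hfinal.congr (fun u => ?_)
  rw [div_div]
  congr 1
  ring
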